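/- (Pumping lemma for automatic sequences.) Let λ ≥ 2 be an integer and let f : ℕ → ℂ be λ-automatic. Then there exists n₀ > 0 such that for every integer n ≥ n₀ there exist integers ℓ₁, ℓ₃ ≥ 0, ℓ₂ ≥ 1 and natural numbers x < λ^{ℓ₃}, y < λ^{ℓ₂}, z < λ^{ℓ₁} such that n = x·λ^{ℓ₁+ℓ₂} + y·λ^{ℓ₁} + z, and f(n) = f( x·λ^{ℓ₁ + k·ℓ₂} + y·λ^{ℓ₁}·(λ^{k·ℓ₂} − 1)/(λ^{ℓ₂} − 1) + z ) for all k ≥ 0. -/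

import Mathlib

/-- A sequence `f : ℕ → ℂ` is `lam`-automatic if its `lam`-kernel is finite. -/
def IsAutomatic (lam : ℕ) (f : ℕ → ℂ) : Prop :=
  {g : ℕ → ℂ | ∃ k r : ℕ, r < lam ^ k ∧ g = fun n => f (lam ^ k * n + r)}.Finite

/-- A sequence is multiplicative if `f 1 = 1` and `f (m*n) = f m * f n` for coprime `m n ≥ 1`. -/
def IsMultiplicativeSeq (f : ℕ → ℂ) : Prop :=
  f 1 = 1 ∧ ∀ m n : ℕ, 1 ≤ m → 1 ≤ n → Nat.Coprime m n → f (m * n) = f m * f n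

/-- Eventually periodic sequence. -/
def EventuallyPeriodicSeq (f : ℕ → ℂ) : Prop :=
  ∃ d : ℕ, 1 ≤ d ∧ ∃ n₀ : ℕ, ∀ n ≥ n₀, f (n + d) = f n

/-- A Dirichlet character of modulus `k`: `k`-periodic, completely multiplicative,
and vanishing exactly at arguments not coprime to `k`. -/
def IsDirichletCharacterSeq (k : ℕ) (χ : ℕ → ℂ) : Prop :=
  (∀ n : ℕ, χ (n + k) = χ n) ∧ (∀ m n : ℕ, χ (m * n) = χ m * χ n) ∧
    (∀ n : ℕ, χ n = 0 ↔ 1 < Nat.gcd n k)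

lemma geom_aux (a : ℕ) (ha : 1 ≤ a) (k : ℕ) :
    (a - 1) * ∑ t ∈ Finset.range k, a ^ t = a ^ k - 1 := by
  induction k with
  | zero => simp
  | succ k ih =>
    rw [Finset.sum_range_succ, Nat.mul_add, ih, pow_succ]
    have h1 : 1 ≤ a ^ k := Nat.one_le_pow _ _ ha
    have h2 : (a - 1) * a ^ k = a * a ^ k - a ^ k := by
      rw [Nat.sub_mul, one_mul]
    have h3 : a ^ k ≤ a ^ k * a := Nat.le_mul_of_pos_right _ ha
    rw [h2, mul_comm a (a ^ k)]
    omega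

lemma geom_succ (B : ℕ) (k : ℕ) :
    B * ∑ t ∈ Finset.range k, B ^ t + 1 = ∑ t ∈ Finset.range (k + 1), B ^ t := by
  rw [Finset.sum_range_succ', Finset.mul_sum]
  simp [pow_succ, mul_comm]

lemma stmt_9_aux (lam : ℕ) (hlam : 2 ≤ lam) (f : ℕ → ℂ) (n i j : ℕ) (hij : i < j)
    (heq : (fun m => f (lam ^ i * m + n % lam ^ i)) =
           (fun m => f (lam ^ j * m + n % lam ^ j))) :
    ∃ l₁ l₂ l₃ x y z : ℕ,
      1 ≤ l₂ ∧ x < lam ^ l₃ ∧ y < lam ^ l₂ ∧ z < lam ^ l₁ ∧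
      n = x * lam ^ (l₁ + l₂) + y * lam ^ l₁ + z ∧
      ∀ k : ℕ,
        f n = f (x * lam ^ (l₁ + k * l₂) +
          y * lam ^ l₁ * ((lam ^ (k * l₂) - 1) / (lam ^ l₂ - 1)) + z) := by
  have hlam1 : 1 < lam := hlam
  set l₂ := j - i with hl₂
  have hl2pos : 1 ≤ l₂ := by omega
  set a := lam ^ i with ha
  set B := lam ^ l₂ with hB
  have hapos : 0 < a := pow_pos (by omega) _
  have hB2 : 2 ≤ B := le_trans hlam (Nat.le_self_pow (by omega) lam)
  have hjiB : lam ^ j = a * B := by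
    rw [ha, hB, ← pow_add]
    congr 1
    omega
  set z := n % a with hz
  set q := n / a with hq
  set y := q % B with hy
  set x := q / B with hx
  have hzlt : z < a := Nat.mod_lt _ hapos
  have hylt : y < B := Nat.mod_lt _ (by omega)
  have hn : n = a * q + z := (Nat.div_add_mod n a).symm
  have hqd : q = B * x + y := (Nat.div_add_mod q B).symm
  -- the remainder mod lam^j
  have hmod : n % (a * B) = y * a + z := by
    have h1 : n = (y * a + z) + (a * B) * x := by rw [hn, hqd]; ring
    have h2 : y * a + z < a * B := by
      calc y * a + z < (y + 1) * a := by nlinarith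
        _ ≤ B * a := Nat.mul_le_mul_right _ (by omega)
        _ = a * B := mul_comm _ _
    rw [h1, Nat.add_mul_mod_self_left, Nat.mod_eq_of_lt h2]
  have key : ∀ m : ℕ, f (a * m + z) = f (a * B * m + (y * a + z)) := by
    intro m
    have := congrFun heq m
    simpa [hjiB, hmod, ← hz] using this
  -- the pumped numbers
  set S : ℕ → ℕ := fun k => ∑ t ∈ Finset.range k, B ^ t with hS
  set M : ℕ → ℕ := fun k => x * B ^ k + y * S k with hM
  have hMsucc : ∀ k, M (k + 1) = B * M k + y := by
    intro k
    have h1 : B * S k + 1 = S (k + 1) := geom_succ B k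
    simp only [hM, hS] at *
    calc x * B ^ (k + 1) + y * S (k + 1) = x * B ^ (k + 1) + y * (B * S k + 1) := by rw [h1]
      _ = B * (x * B ^ k + y * S k) + y := by ring
  have hconst : ∀ k : ℕ, f (a * M k + z) = f (a * x + z) := by
    intro k
    induction k with
    | zero => simp [hM, hS]
    | succ k ih =>
      have : a * M (k + 1) + z = a * B * M k + (y * a + z) := by
        rw [hMsucc k]; ring
      rw [this, ← key (M k), ih]
  have hfn : f n = f (a * x + z) := by
    have h1 : n = a * M 1 + z := by
      simp only [hM, hS, Finset.sum_range_one, pow_zero, pow_one, mul_one]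
      rw [hn, hqd]; ring
    rw [h1, hconst 1]
  refine ⟨i, l₂, x, x, y, z, hl2pos, (Nat.lt_pow_self hlam1 : x < lam ^ x), hylt, hzlt, ?_, ?_⟩
  · rw [pow_add, ← ha, ← hB, hn, hqd]; ring
  · intro k
    have hdiv : (B ^ k - 1) / (B - 1) = S k := by
      have := geom_aux B (by omega) k
      exact Nat.div_eq_of_eq_mul_left (by omega) (by rw [← this]; ring)
    have harg : x * lam ^ (i + k * l₂) + y * lam ^ i * ((lam ^ (k * l₂) - 1) / (lam ^ l₂ - 1)) + z
        = a * M k + z := by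
      rw [pow_add, ← ha, mul_comm k l₂, pow_mul, ← hB, hdiv]
      simp only [hM]
      ring
    rw [harg, hconst k, hfn]

theorem stmt_9 (lam : ℕ) (hlam : 2 ≤ lam) (f : ℕ → ℂ) (haut : IsAutomatic lam f) :
    ∃ n₀ : ℕ, 0 < n₀ ∧ ∀ n ≥ n₀, ∃ l₁ l₂ l₃ x y z : ℕ,
      1 ≤ l₂ ∧ x < lam ^ l₃ ∧ y < lam ^ l₂ ∧ z < lam ^ l₁ ∧
      n = x * lam ^ (l₁ + l₂) + y * lam ^ l₁ + z ∧
      ∀ k : ℕ,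
        f n = f (x * lam ^ (l₁ + k * l₂) +
          y * lam ^ l₁ * ((lam ^ (k * l₂) - 1) / (lam ^ l₂ - 1)) + z) := by
  refine ⟨1, Nat.one_pos, fun n _ => ?_⟩
  haveI := haut.to_subtype
  let φ : ℕ → {g : ℕ → ℂ | ∃ k r : ℕ, r < lam ^ k ∧ g = fun m => f (lam ^ k * m + r)} :=
    fun j => ⟨fun m => f (lam ^ j * m + n % lam ^ j),
      ⟨j, n % lam ^ j, Nat.mod_lt _ (pow_pos (by omega) _), rfl⟩⟩
  obtain ⟨i, j, hne, hφ⟩ := Finite.exists_ne_map_eq_of_infinite φ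
  have hfe : (fun m => f (lam ^ i * m + n % lam ^ i)) =
      (fun m => f (lam ^ j * m + n % lam ^ j)) := congrArg Subtype.val hφ
  rcases hne.lt_or_gt with hij | hij
  · exact stmt_9_aux lam hlam f n i j hij hfe
  · exact stmt_9_aux lam hlam f n j i hij hfe.symm
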